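/- Let b_1, …, b_ℓ : ℝ^n → ℝ be continuously differentiable, let g : ℝ^n → ℝ^{n×m}, let ρ > 0, define h(x) = softmin_ρ(b_1(x), …, b_ℓ(x)), and let x ∈ ℝ^n. If the zero vector of ℝ^{1×m} is not in the convex hull of {L_g b_1(x), …, L_g b_ℓ(x)}, then L_g h(x) ≠ 0. -/

import Mathlib

/-- The log-sum-exponential soft minimum. -/
noncomputable def softmin {N : ℕ} (ρ : ℝ) (z : Fin N → ℝ) : ℝ :=
  -(1 / ρ) * Real.log (∑ i, Real.exp (-ρ * z i))

/-- Lie derivative of `η` along the columns of `g`: `L_g η(x) = η′(x) g(x)`. -/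
noncomputable def LieG {n m : ℕ} (η : (Fin n → ℝ) → ℝ)
    (g : (Fin n → ℝ) → Fin n → Fin m → ℝ) (x : Fin n → ℝ) : Fin m → ℝ :=
  fun i => fderiv ℝ η x (fun k => g x k i)

/-- Proposition 5: if the zero row vector is not in the convex hull of
`{L_g b_1(x), …, L_g b_ℓ(x)}`, then `L_g h(x) ≠ 0`, where `h` is the
soft minimum of the `b_j`. -/
theorem LieG_softmin_ne_zero {n m ℓ : ℕ} (hℓ : 0 < ℓ)
    (b : Fin ℓ → (Fin n → ℝ) → ℝ) (hb : ∀ j, ContDiff ℝ 1 (b j))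
    (g : (Fin n → ℝ) → Fin n → Fin m → ℝ)
    (ρ : ℝ) (hρ : 0 < ρ)
    (h : (Fin n → ℝ) → ℝ) (hdef : ∀ x, h x = softmin ρ fun j => b j x)
    (x : Fin n → ℝ)
    (hconv : (0 : Fin m → ℝ) ∉ convexHull ℝ (Set.range fun j => LieG (b j) g x)) :
    LieG h g x ≠ 0 := by
  haveI : Nonempty (Fin ℓ) := Fin.pos_iff_nonempty.mp hℓ
  have hd : ∀ j, DifferentiableAt ℝ (b j) x := fun j =>
    ((hb j).differentiable one_ne_zero).differentiableAt
  set D : Fin ℓ → (Fin n → ℝ) →L[ℝ] ℝ := fun j => fderiv ℝ (b j) x with hDdef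
  have hD : ∀ j, HasFDerivAt (b j) (D j) x := fun j => (hd j).hasFDerivAt
  have hS : HasFDerivAt (fun y => ∑ j, Real.exp (-ρ * b j y))
      (∑ j ∈ Finset.univ, (Real.exp (-ρ * b j x)) • ((-ρ) • D j)) x :=
    HasFDerivAt.fun_sum fun j _ => ((hD j).const_mul (-ρ)).exp
  set S := ∑ j, Real.exp (-ρ * b j x) with hSdef
  have hSpos : 0 < S := Finset.sum_pos (fun j _ => Real.exp_pos _) Finset.univ_nonempty
  have hlog : HasFDerivAt (fun y => Real.log (∑ j, Real.exp (-ρ * b j y)))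
      (S⁻¹ • ∑ j ∈ Finset.univ, (Real.exp (-ρ * b j x)) • ((-ρ) • D j)) x :=
    hS.log (ne_of_gt hSpos)
  have hfun : h = fun y => -(1/ρ) * Real.log (∑ j, Real.exp (-ρ * b j y)) :=
    funext fun y => by rw [hdef]; rfl
  set lam : Fin ℓ → ℝ := fun j => Real.exp (-ρ * b j x) / S with hlamdef
  have hh : HasFDerivAt h (∑ j ∈ Finset.univ, lam j • D j) x := by
    have h1 := hlog.const_mul (-(1/ρ))
    rw [← hfun] at h1
    refine h1.congr_fderiv ?_
    rw [Finset.smul_sum, Finset.smul_sum]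
    apply Finset.sum_congr rfl
    intro j _
    rw [smul_smul, smul_smul, smul_smul]
    congr 1
    field_simp [hlamdef]
    simp only [hlamdef]; rw [mul_div_assoc', mul_div_right_comm, div_self hSpos.ne', one_mul, neg_mul]
  have hfd : fderiv ℝ h x = ∑ j ∈ Finset.univ, lam j • D j := hh.fderiv
  have hLie : LieG h g x = ∑ j ∈ Finset.univ, lam j • LieG (b j) g x := by
    funext i
    simp only [LieG, hfd]
    rw [ContinuousLinearMap.sum_apply]
    simp only [Finset.sum_apply, Pi.smul_apply, smul_eq_mul]
    rfl
  have hlam_nonneg : ∀ j ∈ Finset.univ, (0:ℝ) ≤ lam j := fun j _ =>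
    div_nonneg (Real.exp_pos _).le hSpos.le
  have hlam_sum : ∑ j ∈ Finset.univ, lam j = 1 := by
    rw [hlamdef]
    rw [← Finset.sum_div, ← hSdef, div_self (ne_of_gt hSpos)]
  intro hzero
  apply hconv
  have hmem : (Finset.univ.centerMass lam fun j => LieG (b j) g x) ∈
      convexHull ℝ (Set.range fun j => LieG (b j) g x) :=
    Finset.centerMass_mem_convexHull _ hlam_nonneg (by rw [hlam_sum]; norm_num)
      (fun j _ => Set.mem_range_self j)
  rwa [Finset.centerMass, hlam_sum, inv_one, one_smul, ← hLie, hzero] at hmem
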